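/- (Yau's inequality for finite-state Markov dynamics.) Let Ω be a finite set, r : Ω × Ω → [0,∞) with r(x,x) = 0, and define L g(x) := Σ_y r(x,y)(g(y) − g(x)) and Γ g(x) := Σ_y r(x,y)(g(y) − g(x))². Let ν be a probability measure on Ω with ν(x) > 0 for all x, and let L* denote the adjoint of L in L²(ν). Let T > 0 and let t ↦ μ_t, t ∈ [0,T], be a family of probability measures on Ω with μ_t(x) > 0 for all x, differentiable in t; set ψ_t(x) := μ_t(x)/ν(x). Let t ↦ f_t : Ω → (0,∞) be differentiable in t, with ∫ f_t dμ_t = 1 for all t, and suppose the forward Fokker–Planck equation holds: d/dt ( f_t(x) ψ_t(x) ) = L*( f_t ψ_t )(x) for all x ∈ Ω and t ∈ [0,T]. Define H(t) := ∫ f_t log f_t dμ_t. Then for every t ∈ [0,T], H'(t) ≤ − ∫ Γ(√f_t) dμ_t + ∫ ( L_t* 1 − d/dt log ψ_t ) f_t dμ_t, where L_t* 1 (x) := Σ_y ( r(y,x) μ_t(y)/μ_t(x) − r(x,y) ). -/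

import Mathlib

open Finset Real

private lemma yau_key {a b : ℝ} (ha : 0 < a) (hb : 0 < b) :
    a * (Real.log b - Real.log a) ≤ 2 * Real.sqrt a * (Real.sqrt b - Real.sqrt a) := by
  have hsa : 0 < Real.sqrt a := Real.sqrt_pos.mpr ha
  have hsb : 0 < Real.sqrt b := Real.sqrt_pos.mpr hb
  have h1 : Real.log (Real.sqrt b / Real.sqrt a) ≤ Real.sqrt b / Real.sqrt a - 1 :=
    Real.log_le_sub_one_of_pos (by positivity)
  have h2 : Real.log b - Real.log a = 2 * Real.log (Real.sqrt b / Real.sqrt a) := by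
    rw [Real.log_div hsb.ne' hsa.ne', Real.log_sqrt ha.le, Real.log_sqrt hb.le]; ring
  have ha2 : Real.sqrt a * Real.sqrt a = a := Real.mul_self_sqrt ha.le
  have h3 := mul_le_mul_of_nonneg_left h1 (by positivity : (0:ℝ) ≤ 2 * a)
  have h4 : 2 * a * (Real.sqrt b / Real.sqrt a - 1) = 2 * Real.sqrt a * (Real.sqrt b - Real.sqrt a) := by
    have e : Real.sqrt b / Real.sqrt a * Real.sqrt a = Real.sqrt b := div_mul_cancel₀ _ hsa.ne'
    linear_combination (2 - 2 * (Real.sqrt b / Real.sqrt a)) * ha2 + 2 * Real.sqrt a * e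
  nlinarith [h3]


/-- Yau's inequality for finite-state Markov dynamics: if `μ_t` are fully-supported
probability measures differentiable in `t`, `f_t` are positive densities w.r.t. `μ_t`
differentiable in `t`, and the forward Fokker–Planck equation
`d/dt(f_t ψ_t) = L*(f_t ψ_t)` holds (with `ψ_t = μ_t/ν` and `L*` the adjoint of `L` in
`L²(ν)`), then `H'(t) ≤ -∫ Γ(√f_t) dμ_t + ∫ (L_t* 1 - d/dt log ψ_t) f_t dμ_t`,
where `L_t* 1(x) = Σ_y (r(y,x)μ_t(y)/μ_t(x) - r(x,y))` and `d/dt log ψ_t = μ_t'/μ_t`. -/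
theorem yau_inequality {Ω : Type*} [Fintype Ω]
    (r : Ω → Ω → ℝ) (hr : ∀ x y, 0 ≤ r x y) (hrdiag : ∀ x, r x x = 0)
    (ν : Ω → ℝ) (hνpos : ∀ x, 0 < ν x) (hν1 : ∑ x, ν x = 1)
    (Lstar : (Ω → ℝ) → Ω → ℝ)
    (hadj : ∀ g h : Ω → ℝ,
      ∑ x, (∑ y, r x y * (g y - g x)) * h x * ν x = ∑ x, g x * Lstar h x * ν x)
    (T : ℝ) (hT : 0 < T)
    (μ μ' : ℝ → Ω → ℝ)
    (hμpos : ∀ t ∈ Set.Icc 0 T, ∀ x, 0 < μ t x)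
    (hμ1 : ∀ t ∈ Set.Icc 0 T, ∑ x, μ t x = 1)
    (hμderiv : ∀ t ∈ Set.Icc 0 T, ∀ x, HasDerivAt (fun s => μ s x) (μ' t x) t)
    (f f' : ℝ → Ω → ℝ)
    (hfpos : ∀ t ∈ Set.Icc 0 T, ∀ x, 0 < f t x)
    (hf1 : ∀ t ∈ Set.Icc 0 T, ∑ x, f t x * μ t x = 1)
    (hfderiv : ∀ t ∈ Set.Icc 0 T, ∀ x, HasDerivAt (fun s => f s x) (f' t x) t)
    (hFP : ∀ t ∈ Set.Icc 0 T, ∀ x,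
      HasDerivAt (fun s => f s x * (μ s x / ν x))
        (Lstar (fun y => f t y * (μ t y / ν y)) x) t) :
    ∀ t ∈ Set.Icc 0 T,
      deriv (fun s => ∑ x, f s x * Real.log (f s x) * μ s x) t
        ≤ -(∑ x, (∑ y, r x y * (Real.sqrt (f t y) - Real.sqrt (f t x)) ^ 2) * μ t x)
          + ∑ x, ((∑ y, (r y x * μ t y / μ t x - r x y)) - μ' t x / μ t x)
              * f t x * μ t x := by
  intro t ht
  set u : Ω → ℝ := fun y => f t y * (μ t y / ν y) with hu
  have hfp : ∀ x, 0 < f t x := hfpos t ht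
  have hμp : ∀ x, 0 < μ t x := hμpos t ht
  -- derivative of entropy
  have hH : HasDerivAt (fun s => ∑ x, f s x * Real.log (f s x) * μ s x)
      (∑ x, ((f' t x * Real.log (f t x) + f t x * (f' t x / f t x)) * μ t x
        + f t x * Real.log (f t x) * μ' t x)) t := by
    apply HasDerivAt.fun_sum
    intro x _
    exact ((hfderiv t ht x).mul ((hfderiv t ht x).log (hfp x).ne')).mul (hμderiv t ht x)
  have hderiv_eq : deriv (fun s => ∑ x, f s x * Real.log (f s x) * μ s x) t
      = ∑ x, (f' t x * Real.log (f t x) * μ t x + f' t x * μ t x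
        + f t x * Real.log (f t x) * μ' t x) := by
    rw [hH.deriv]
    refine Finset.sum_congr rfl fun x _ => ?_
    have h : f t x * (f' t x / f t x) = f' t x := by
      rw [mul_comm, div_mul_cancel₀ _ (hfp x).ne']
    rw [h]; ring
  -- Fokker-Planck gives f'μ + fμ' = Lstar u * ν
  have hLs : ∀ x, f' t x * μ t x + f t x * μ' t x = Lstar u x * ν x := by
    intro x
    have h1 : HasDerivAt (fun s => f s x * (μ s x / ν x))
        (f' t x * (μ t x / ν x) + f t x * (μ' t x / ν x)) t :=
      (hfderiv t ht x).mul ((hμderiv t ht x).div_const (ν x))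
    have h2 := h1.unique (hFP t ht x)
    have hν := (hνpos x).ne'
    rw [← h2]
    field_simp
  -- adjoint identity
  have hadj' : ∑ x, (∑ y, r x y * (Real.log (f t y) - Real.log (f t x))) * u x * ν x
      = ∑ x, Real.log (f t x) * Lstar u x * ν x :=
    hadj (fun y => Real.log (f t y)) u
  have huν : ∀ x, u x * ν x = f t x * μ t x := by
    intro x
    have hν := (hνpos x).ne'
    simp only [hu]
    field_simp
  -- normalization: sum of derivative of ∑ f μ is 0
  have hnorm : ∑ x, (f' t x * μ t x + f t x * μ' t x) = 0 := by
    have hG : HasDerivAt (fun s => ∑ x, f s x * μ s x)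
        (∑ x, (f' t x * μ t x + f t x * μ' t x)) t :=
      HasDerivAt.fun_sum (fun x _ => (hfderiv t ht x).mul (hμderiv t ht x))
    have h1 : HasDerivWithinAt (fun s => ∑ x, f s x * μ s x)
        (∑ x, (f' t x * μ t x + f t x * μ' t x)) (Set.Icc 0 T) t := hG.hasDerivWithinAt
    have h2 : HasDerivWithinAt (fun s => ∑ x, f s x * μ s x) 0 (Set.Icc 0 T) t :=
      (hasDerivWithinAt_const t _ (1:ℝ)).congr (fun y hy => hf1 y hy) (hf1 t ht)
    have hud : UniqueDiffWithinAt ℝ (Set.Icc 0 T) t := (uniqueDiffOn_Icc hT) t ht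
    rw [← h1.derivWithin hud]
    exact h2.derivWithin hud
  -- step 1: exact formula for the derivative
  have hstep1 : deriv (fun s => ∑ x, f s x * Real.log (f s x) * μ s x) t
      = ∑ x, (∑ y, r x y * (Real.log (f t y) - Real.log (f t x))) * (f t x * μ t x)
        - ∑ x, f t x * μ' t x := by
    rw [hderiv_eq]
    have e1 : ∑ x, (f' t x * Real.log (f t x) * μ t x + f' t x * μ t x
        + f t x * Real.log (f t x) * μ' t x)
      = (∑ x, Real.log (f t x) * (Lstar u x * ν x)) + ∑ x, f' t x * μ t x := by
      rw [← Finset.sum_add_distrib]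
      refine Finset.sum_congr rfl fun x _ => ?_
      rw [← hLs x]; ring
    rw [e1]
    have e2 : ∑ x, Real.log (f t x) * (Lstar u x * ν x)
        = ∑ x, (∑ y, r x y * (Real.log (f t y) - Real.log (f t x))) * (f t x * μ t x) := by
      rw [show (∑ x, Real.log (f t x) * (Lstar u x * ν x))
          = ∑ x, Real.log (f t x) * Lstar u x * ν x from
        Finset.sum_congr rfl fun x _ => by ring, ← hadj']
      refine Finset.sum_congr rfl fun x _ => ?_
      rw [← huν x]; ring
    rw [e2]
    have e3 : ∑ x, f' t x * μ t x = - ∑ x, f t x * μ' t x := by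
      rw [Finset.sum_add_distrib] at hnorm
      linarith
    rw [e3]; ring
  -- step 2: pointwise log inequality
  have hstep2 : ∑ x, (∑ y, r x y * (Real.log (f t y) - Real.log (f t x))) * (f t x * μ t x)
      ≤ ∑ x, (∑ y, r x y * (2 * Real.sqrt (f t x) * (Real.sqrt (f t y) - Real.sqrt (f t x)))) * μ t x := by
    refine Finset.sum_le_sum fun x _ => ?_
    rw [Finset.sum_mul, Finset.sum_mul]
    refine Finset.sum_le_sum fun y _ => ?_
    have hk := yau_key (hfp x) (hfp y)
    have h := mul_le_mul_of_nonneg_left hk (mul_nonneg (hr x y) (hμp x).le)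
    nlinarith [h]
  -- step 3: algebraic identity for the right-hand side
  have hstep3 : ∑ x, (∑ y, r x y * (2 * Real.sqrt (f t x) * (Real.sqrt (f t y) - Real.sqrt (f t x)))) * μ t x
      - ∑ x, f t x * μ' t x
    = -(∑ x, (∑ y, r x y * (Real.sqrt (f t y) - Real.sqrt (f t x)) ^ 2) * μ t x)
      + ∑ x, ((∑ y, (r y x * μ t y / μ t x - r x y)) - μ' t x / μ t x)
          * f t x * μ t x := by
    have eR : ∑ x, ((∑ y, (r y x * μ t y / μ t x - r x y)) - μ' t x / μ t x)
          * f t x * μ t x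
        = (∑ x, ∑ y, (r y x * μ t y * f t x - r x y * f t x * μ t x))
          - ∑ x, f t x * μ' t x := by
      rw [← Finset.sum_sub_distrib]
      refine Finset.sum_congr rfl fun x _ => ?_
      have hμx := (hμp x).ne'
      have hS : (∑ y, (r y x * μ t y / μ t x - r x y)) * (f t x * μ t x)
          = ∑ y, (r y x * μ t y * f t x - r x y * f t x * μ t x) := by
        rw [Finset.sum_mul]
        refine Finset.sum_congr rfl fun y _ => ?_
        field_simp
      have hc : μ' t x / μ t x * f t x * μ t x = f t x * μ' t x := by
        field_simp
      calc ((∑ y, (r y x * μ t y / μ t x - r x y)) - μ' t x / μ t x) * f t x * μ t x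
          = (∑ y, (r y x * μ t y / μ t x - r x y)) * (f t x * μ t x)
            - μ' t x / μ t x * f t x * μ t x := by ring
        _ = (∑ y, (r y x * μ t y * f t x - r x y * f t x * μ t x)) - f t x * μ' t x := by
            rw [hS, hc]
    rw [eR]
    have hswap : ∑ x, ∑ y, (r y x * μ t y * f t x - r x y * f t x * μ t x)
        = ∑ x, ∑ y, (r x y * μ t x * f t y - r x y * f t x * μ t x) := by
      simp only [Finset.sum_sub_distrib]
      congr 1
      rw [Finset.sum_comm]
    rw [hswap]
    have hkey : ∑ x, (∑ y, r x y * (2 * Real.sqrt (f t x) * (Real.sqrt (f t y) - Real.sqrt (f t x)))) * μ t x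
        + ∑ x, (∑ y, r x y * (Real.sqrt (f t y) - Real.sqrt (f t x)) ^ 2) * μ t x
      = ∑ x, ∑ y, (r x y * μ t x * f t y - r x y * f t x * μ t x) := by
      rw [← Finset.sum_add_distrib]
      refine Finset.sum_congr rfl fun x _ => ?_
      rw [Finset.sum_mul, Finset.sum_mul, ← Finset.sum_add_distrib]
      refine Finset.sum_congr rfl fun y _ => ?_
      have hsx : Real.sqrt (f t x) ^ 2 = f t x := Real.sq_sqrt (hfp x).le
      have hsy : Real.sqrt (f t y) ^ 2 = f t y := Real.sq_sqrt (hfp y).le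
      linear_combination r x y * μ t x * hsy - r x y * μ t x * hsx
    linarith [hkey]
  rw [hstep1, ← hstep3]
  exact sub_le_sub_right hstep2 _
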